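/- arXiv:0910.0375 — 2 statements merged into one kernel-verified Lean document; each statement's English description precedes it below -/
import Mathlib

section
/- Let e₁, …, e_{n+1} ∈ {1, -1} and a₁, …, a_{n+1} be positive reals such that e_i a_k² - e_k a_i² ≠ 0 for all i ≠ k. For x, v ∈ ℝ^{n+1} define F_k(x,v) = v_k²/e_k + Σ_{i ≠ k} (x_i v_k - x_k v_i)² / (e_i a_k² - e_k a_i²). Then Σ_{k=1}^{n+1} F_k(x,v) = Σ_{k=1}^{n+1} e_k v_k², i.e. the sum of the integrals equals the pseudo-Euclidean square norm ⟨v,v⟩. -/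
open Finset in
/-- The Moser-type integrals `F_k` of the billiard inside an ellipsoid in
pseudo-Euclidean space sum up to the pseudo-Euclidean square norm `⟨v,v⟩`. -/
theorem stmt_1 (n : ℕ) (e a : Fin (n + 1) → ℝ)
    (he : ∀ k, e k = 1 ∨ e k = -1) (ha : ∀ k, 0 < a k)
    (hne : ∀ i k, i ≠ k → e i * (a k) ^ 2 - e k * (a i) ^ 2 ≠ 0)
    (F : Fin (n + 1) → (Fin (n + 1) → ℝ) → (Fin (n + 1) → ℝ) → ℝ)
    (hF : ∀ k x v, F k x v = (v k) ^ 2 / e k +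
      ∑ i ∈ univ \ {k}, (x i * v k - x k * v i) ^ 2 / (e i * (a k) ^ 2 - e k * (a i) ^ 2))
    (x v : Fin (n + 1) → ℝ) :
    ∑ k, F k x v = ∑ k, e k * (v k) ^ 2 := by
  set g : Fin (n + 1) → Fin (n + 1) → ℝ := fun k i =>
    (x i * v k - x k * v i) ^ 2 / (e i * (a k) ^ 2 - e k * (a i) ^ 2) with hg
  have hanti : ∀ k i, g k i = - g i k := by
    intro k i
    have h1 : (x k * v i - x i * v k) ^ 2 = (x i * v k - x k * v i) ^ 2 := by ring
    have h2 : e k * (a i) ^ 2 - e i * (a k) ^ 2 = -(e i * (a k) ^ 2 - e k * (a i) ^ 2) := by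
      ring
    simp only [hg, h1, h2, div_neg, neg_neg]
  have hS : ∑ k, ∑ i ∈ univ \ {k}, g k i = 0 := by
    have hif : ∑ k, ∑ i ∈ univ \ {k}, g k i
        = ∑ k, ∑ i, if i ≠ k then g k i else 0 := by
      refine Finset.sum_congr rfl fun k _ => ?_
      rw [Finset.sum_ite, Finset.sum_const_zero, add_zero]
      congr 1
      ext i
      simp [Finset.mem_sdiff]
    have h2 : ∑ k, ∑ i, (if i ≠ k then g k i else 0)
        = -∑ k, ∑ i, (if i ≠ k then g k i else 0) := by
      nth_rewrite 1 [Finset.sum_comm]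
      rw [← Finset.sum_neg_distrib]
      refine Finset.sum_congr rfl fun k _ => ?_
      rw [← Finset.sum_neg_distrib]
      refine Finset.sum_congr rfl fun i _ => ?_
      by_cases h : i = k
      · simp [h]
      · simp [h, Ne.symm h, hanti i k]
    rw [hif]
    linarith [h2]
  have hdiag : ∀ k, (v k) ^ 2 / e k = e k * (v k) ^ 2 := by
    intro k
    rcases he k with h | h <;> simp [h] <;> ring
  simp only [hF]
  rw [Finset.sum_add_distrib, hS, add_zero]
  exact Finset.sum_congr rfl fun k _ => hdiag k
end

section
/- Let V be a finite-dimensional real vector space and A : V → V* a self-adjoint linear map (A(x)·y = A(y)·x). Suppose x, y ∈ V with A(x)·x = A(y)·y = 1, suppose v ∈ V is a scalar multiple of y - x (the ball travels from x to y along direction v), and suppose u ∈ V satisfies A(y)·(v + u) = 0 (billiard reflection at y). Then A(x)·v = A(y)·u, i.e. the function H(x,v) = A(x)·v is invariant under the billiard ball map. -/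
/-- Invariance of `H(x,v) = A(x)·v` under the billiard ball map inside the
ellipsoid `A(z)·z = 1`: if `x, y` lie on the ellipsoid, `v` is a scalar
multiple of `y - x`, and the reflection at `y` satisfies `A(y)·(v + u) = 0`,
then `A(x)·v = A(y)·u`. -/
theorem stmt_5 (V : Type*) [AddCommGroup V] [Module ℝ V] [FiniteDimensional ℝ V]
    (A : V →ₗ[ℝ] Module.Dual ℝ V) (hA : ∀ x y : V, A x y = A y x)
    (x y v u : V) (hx : A x x = 1) (hy : A y y = 1)
    (hv : ∃ c : ℝ, v = c • (y - x)) (hu : A y (v + u) = 0) :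
    A x v = A y u := by
  obtain ⟨c, rfl⟩ := hv
  simp only [map_add, map_smul, map_sub, smul_eq_mul] at hu ⊢
  rw [hA x y] at *
  rw [hy] at hu
  rw [hx]
  linarith
end
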